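/- Let 𝔤 be a two-step nilpotent real Lie algebra, l ∈ 𝔤*, and let ad*(X)·l denote the functional Y ↦ l([Y,X]). Then the coadjoint orbit of l under the simply connected group G = exp 𝔤, given by (exp X)·l = l ∘ Ad(exp(-X)), equals the affine subspace l + 𝔤(l)^⊥, where 𝔤(l)^⊥ = {f ∈ 𝔤* : f vanishes on 𝔤(l)} and 𝔤(l) is the radical of the form B_l(X,Y) = l([X,Y]). -/

import Mathlib

/-- The coadjoint orbit of `l` for a two-step nilpotent Lie algebra equals
`l + 𝔤(l)^⊥`.  Since `[𝔤,[𝔤,𝔤]] = 0`, `Ad(exp X) = id + ad X + (1/2)(ad X)²`,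
so `Ad*(exp X) l` sends `Y` to `l (Y + ⁅-X, Y⁆ + (1/2) • ⁅-X, ⁅-X, Y⁆⁆)`. -/
theorem stmt_8 (L : Type*) [LieRing L] [LieAlgebra ℝ L] [FiniteDimensional ℝ L]
    (h2 : ∀ x y z : L, ⁅x, ⁅y, z⁆⁆ = 0)
    (l : Module.Dual ℝ L) :
    {f : Module.Dual ℝ L | ∃ X : L, ∀ Y : L,
        f Y = l (Y + ⁅-X, Y⁆ + (1/2 : ℝ) • ⁅-X, ⁅-X, Y⁆⁆)} =
    {f : Module.Dual ℝ L | ∀ Z : L, (∀ Y : L, l ⁅Z, Y⁆ = 0) → f Z = l Z} := by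
  classical
  -- the linear map X ↦ (Y ↦ l ⁅X, Y⁆)
  set φ : L →ₗ[ℝ] Module.Dual ℝ L :=
    { toFun := fun X => l ∘ₗ ((LieAlgebra.ad ℝ L) X : L →ₗ[ℝ] L)
      map_add' := by intro x y; ext Y; simp [add_lie]
      map_smul' := by intro c x; ext Y; simp [smul_lie] } with hφ
  have hφ_apply : ∀ X Y : L, φ X Y = l ⁅X, Y⁆ := fun X Y => rfl
  have hker : ∀ Z : L, Z ∈ LinearMap.ker φ ↔ ∀ Y : L, l ⁅Z, Y⁆ = 0 := by
    intro Z
    rw [LinearMap.mem_ker, LinearMap.ext_iff]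
    exact ⟨fun h Y => h Y, fun h Y => h Y⟩
  have hle : LinearMap.range φ ≤ (LinearMap.ker φ).dualAnnihilator := by
    rintro f ⟨X, rfl⟩
    rw [Submodule.mem_dualAnnihilator]
    intro Z hZ
    have h0 := (hker Z).1 hZ X
    rw [hφ_apply, ← lie_skew X Z, map_neg, h0, neg_zero]
  have hfr : Module.finrank ℝ (LinearMap.range φ) =
      Module.finrank ℝ ((LinearMap.ker φ).dualAnnihilator : Submodule ℝ (Module.Dual ℝ L)) := by
    have h1 := LinearMap.finrank_range_add_finrank_ker φ
    have h2' := LinearEquiv.finrank_eq (R := ℝ) (M := L ⧸ LinearMap.ker φ)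
      (N := {x // x ∈ (LinearMap.ker φ).dualAnnihilator})
      (Subspace.quotEquivAnnihilator (LinearMap.ker φ))
    have h3 := Submodule.finrank_quotient_add_finrank (LinearMap.ker φ)
    omega
  have heq : LinearMap.range φ = (LinearMap.ker φ).dualAnnihilator :=
    Submodule.eq_of_le_of_finrank_eq hle hfr
  ext f
  simp only [Set.mem_setOf_eq]
  constructor
  · rintro ⟨X, hX⟩ Z hZ
    have : ⁅-X, ⁅-X, Z⁆⁆ = (0 : L) := h2 _ _ _
    rw [hX Z, this, smul_zero, add_zero, map_add]
    have : l ⁅-X, Z⁆ = 0 := by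
      rw [neg_lie, map_neg, ← lie_skew X Z, map_neg, hZ X, neg_zero, neg_zero]
    rw [this, add_zero]
  · intro hf
    have hmem : l - f ∈ LinearMap.range φ := by
      rw [heq, Submodule.mem_dualAnnihilator]
      intro Z hZ
      have := hf Z ((hker Z).1 hZ)
      simp [this]
    obtain ⟨X, hX⟩ := hmem
    refine ⟨X, fun Y => ?_⟩
    have h0 : ⁅-X, ⁅-X, Y⁆⁆ = (0 : L) := h2 _ _ _
    have hXY : l ⁅X, Y⁆ = l Y - f Y := by
      rw [← hφ_apply X Y, hX]; rfl
    rw [h0, smul_zero, add_zero, map_add, neg_lie, map_neg, hXY]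
    ring
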